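/- Let H be a complex Hilbert space, A ∈ B(H), and n ≥ 2 an integer such that Aⁿ = A*A. Then A^(n-1) = A*. -/

import Mathlib

open ContinuousLinearMap Complex

variable {H : Type*} [NormedAddCommGroup H] [InnerProductSpace ℂ H] [CompleteSpace H]

theorem stmt1 (A : H →L[ℂ] H) (n : ℕ) (hn : 2 ≤ n) (h : A ^ n = adjoint A * A) :
    A ^ (n - 1) = adjoint A := by
  have hn1 : n - 1 + 1 = n := by omega
  have hn2 : n - 2 + 1 = n - 1 := by omega
  set B := adjoint A with hB
  have hstarA : star A = B := rfl
  have hstarB : star B = A := by rw [hB, ← star_eq_adjoint, star_star]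
  have hP : A * (B * A) = (B * A) * A := by
    rw [← h, ← pow_succ, ← pow_succ']
  have hPB : Commute B (B * A) := by
    have := congrArg star hP
    simp only [star_mul, hstarA, hstarB, mul_assoc] at this
    simpa [Commute, SemiconjBy, mul_assoc] using this.symm
  have hpow : ∀ k, B ^ k * A ^ k = (B * A) ^ k := by
    intro k
    induction k with
    | zero => simp
    | succ k ih =>
      have hc : B * (B * A) ^ k = (B * A) ^ k * B := (hPB.pow_right k).eq
      calc B ^ (k+1) * A ^ (k+1) = B * (B ^ k * A ^ k) * A := by
            rw [pow_succ' B, pow_succ A]; simp only [mul_assoc]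
        _ = (B * A) ^ k * B * A := by rw [ih, hc]
        _ = (B * A) ^ (k+1) := by rw [pow_succ, mul_assoc]
  have hDA : (A ^ (n-1) - B) * A = 0 := by
    rw [sub_mul, ← pow_succ, hn1, h, sub_self]
  have hadj : adjoint (A ^ (n-1)) = B ^ (n-1) := by
    rw [← star_eq_adjoint, star_pow, hstarA]
  have hker : ∀ v : H, B v = 0 → (A ^ (n-1)) v = 0 := by
    intro v hv
    have e1 : (B * A) ^ (n-1) = (A * A ^ (n-1)) * (B * A) ^ (n-2) := by
      rw [← pow_succ', hn1, h, ← pow_succ', hn2]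
    have key : B ^ (n-1) * A ^ (n-1) = A * (A ^ (n-1) * (B * A) ^ (n-2)) := by
      rw [hpow, e1, mul_assoc]
    have hz : (inner ℂ ((A ^ (n-1)) v) ((A ^ (n-1)) v) : ℂ) = 0 := by
      have h1 : (inner ℂ ((A ^ (n-1)) v) ((A ^ (n-1)) v) : ℂ)
          = inner ℂ v ((B ^ (n-1) * A ^ (n-1)) v) := by
        rw [ContinuousLinearMap.mul_apply, ← hadj, adjoint_inner_right]
      rw [h1, key, ContinuousLinearMap.mul_apply, ← adjoint_inner_left A, ← hB, hv, inner_zero_left]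
    simpa [inner_self_eq_zero] using hz
  ext x
  have hfin : (A ^ (n-1) - B) x = 0 := by
    set K := (LinearMap.range (A : H →ₗ[ℂ] H)).topologicalClosure with hK
    obtain ⟨y, hy, z, hz, rfl⟩ := K.exists_add_mem_mem_orthogonal x
    have hDy : (A ^ (n-1) - B) y = 0 := by
      have hsub : K ≤ LinearMap.ker ((A ^ (n-1) - B : H →L[ℂ] H) : H →ₗ[ℂ] H) := by
        apply Submodule.topologicalClosure_minimal
        · rintro _ ⟨w, rfl⟩
          have := congrFun (congrArg DFunLike.coe hDA) w
          simpa [Module.End.pow_apply] using this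
        · exact ContinuousLinearMap.isClosed_ker _
      exact hsub hy
    have hBz : B z = 0 := by
      have hall : ∀ u : H, (inner ℂ u (B z) : ℂ) = 0 := by
        intro u
        rw [hB, adjoint_inner_right]
        have hm : A u ∈ K := Submodule.le_topologicalClosure _ ⟨u, rfl⟩
        exact (Submodule.mem_orthogonal K z).mp hz (A u) hm
      have := hall (B z)
      simpa [inner_self_eq_zero] using this
    have hDz : (A ^ (n-1) - B) z = 0 := by
      simp [sub_apply, hker z hBz, hBz]
    simp [map_add, hDy, hDz]
  simpa [sub_apply, sub_eq_zero] using hfin
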